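/- For every z ∈ ℂ \ [−1,1] (where [−1,1] is the real segment {x + 0i : −1 ≤ x ≤ 1}), the complex number w = z − (z+1)^{1/2}·(z−1)^{1/2} satisfies 0 < |w| < 1, (w + w⁻¹)/2 = z, and (w − w⁻¹)/2 = −(z+1)^{1/2}·(z−1)^{1/2}. In particular, w is the unique preimage of z in the punctured unit disc under the map w ↦ (w + w⁻¹)/2. -/

import Mathlib

open Complex

private lemma sqrt_re' (x : ℂ) (hx : x ≠ 0) :
    (x ^ ((1:ℂ)/2)).re = Real.sqrt (‖x‖) * Real.cos (x.arg / 2) := by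
  have hc : ((1:ℂ)/2) = ((1/2 : ℝ) : ℂ) := by norm_num
  rw [Complex.cpow_def_of_ne_zero hx, hc, mul_comm, Complex.exp_re,
    Complex.re_ofReal_mul, Complex.im_ofReal_mul, Complex.log_re, Complex.log_im]
  have h1 : Real.exp (1/2 * Real.log (‖x‖)) = Real.sqrt (‖x‖) := by
    rw [Real.sqrt_eq_rpow, Real.rpow_def_of_pos (norm_pos_iff.mpr hx), mul_comm]
  rw [h1]
  ring_nf

private lemma sqrt_im' (x : ℂ) (hx : x ≠ 0) :
    (x ^ ((1:ℂ)/2)).im = Real.sqrt (‖x‖) * Real.sin (x.arg / 2) := by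
  have hc : ((1:ℂ)/2) = ((1/2 : ℝ) : ℂ) := by norm_num
  rw [Complex.cpow_def_of_ne_zero hx, hc, mul_comm, Complex.exp_im,
    Complex.re_ofReal_mul, Complex.im_ofReal_mul, Complex.log_re, Complex.log_im]
  have h1 : Real.exp (1/2 * Real.log (‖x‖)) = Real.sqrt (‖x‖) := by
    rw [Real.sqrt_eq_rpow, Real.rpow_def_of_pos (norm_pos_iff.mpr hx), mul_comm]
  rw [h1]
  ring_nf

private lemma key_pos (z : ℂ) (hz : ¬(z.im = 0 ∧ -1 ≤ z.re ∧ z.re ≤ 1)) :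
    0 < ((z+1) ^ ((1:ℂ)/2)).re * ((z-1) ^ ((1:ℂ)/2)).re +
        ((z+1) ^ ((1:ℂ)/2)).im * ((z-1) ^ ((1:ℂ)/2)).im := by
  have hx : z + 1 ≠ 0 := by
    intro h
    have h1 : z.im = 0 := by simpa using congrArg Complex.im h
    have h2 : z.re = -1 := by
      have := congrArg Complex.re h; simp at this; linarith
    exact hz ⟨h1, by rw [h2]; norm_num⟩
  have hy : z - 1 ≠ 0 := by
    intro h
    have h1 : z.im = 0 := by simpa using congrArg Complex.im h
    have h2 : z.re = 1 := by
      have := congrArg Complex.re h; simp at this; linarith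
    exact hz ⟨h1, by rw [h2]; norm_num⟩
  have harg : -Real.pi < (z+1).arg - (z-1).arg ∧ (z+1).arg - (z-1).arg < Real.pi := by
    have hxim : (z+1).im = z.im := by simp
    have hyim : (z-1).im = z.im := by simp
    have hxle := Complex.arg_le_pi (z+1)
    have hyle := Complex.arg_le_pi (z-1)
    have hxgt := Complex.neg_pi_lt_arg (z+1)
    have hygt := Complex.neg_pi_lt_arg (z-1)
    rcases lt_trichotomy z.im 0 with him | him | him
    · have h1 : (z+1).arg < 0 := Complex.arg_neg_iff.mpr (by rw [hxim]; exact him)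
      have h2 : (z-1).arg < 0 := Complex.arg_neg_iff.mpr (by rw [hyim]; exact him)
      constructor <;> linarith
    · rcases lt_or_ge z.re (-1) with h | h
      · have h1 : (z+1).arg = Real.pi := Complex.arg_eq_pi_iff.mpr
          ⟨by simp; linarith, by rw [hxim]; exact him⟩
        have h2 : (z-1).arg = Real.pi := Complex.arg_eq_pi_iff.mpr
          ⟨by simp; linarith, by rw [hyim]; exact him⟩
        rw [h1, h2]
        constructor <;> simp [Real.pi_pos]
      · have h' : 1 < z.re := by
          push_neg at hz
          rcases lt_or_ge 1 z.re with h'' | h''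
          · exact h''
          · exact absurd h'' (not_le.mpr (hz him h))
        have h1 : (z+1).arg = 0 := Complex.arg_eq_zero_iff.mpr
          ⟨by simp; linarith, by rw [hxim]; exact him⟩
        have h2 : (z-1).arg = 0 := Complex.arg_eq_zero_iff.mpr
          ⟨by simp; linarith, by rw [hyim]; exact him⟩
        rw [h1, h2]
        constructor <;> simp [Real.pi_pos]
    · have h1 : 0 < (z+1).arg := by
        rcases lt_or_eq_of_le (Complex.arg_nonneg_iff.mpr (by rw [hxim]; exact him.le)) with h | h
        · exact h
        · exact absurd (Complex.arg_eq_zero_iff.mp h.symm).2 (by rw [hxim]; exact him.ne')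
      have h2 : 0 < (z-1).arg := by
        rcases lt_or_eq_of_le (Complex.arg_nonneg_iff.mpr (by rw [hyim]; exact him.le)) with h | h
        · exact h
        · exact absurd (Complex.arg_eq_zero_iff.mp h.symm).2 (by rw [hyim]; exact him.ne')
      constructor <;> linarith
  rw [sqrt_re' _ hx, sqrt_re' _ hy, sqrt_im' _ hx, sqrt_im' _ hy]
  have hcos : Real.sqrt (‖z+1‖) * Real.cos ((z+1).arg / 2) *
        (Real.sqrt (‖z-1‖) * Real.cos ((z-1).arg / 2)) +
      Real.sqrt (‖z+1‖) * Real.sin ((z+1).arg / 2) *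
        (Real.sqrt (‖z-1‖) * Real.sin ((z-1).arg / 2)) =
      Real.sqrt (‖z+1‖) * Real.sqrt (‖z-1‖) *
        Real.cos (((z+1).arg - (z-1).arg) / 2) := by
    rw [sub_div, Real.cos_sub]; ring
  rw [hcos]
  apply mul_pos (mul_pos (Real.sqrt_pos.mpr (norm_pos_iff.mpr hx))
    (Real.sqrt_pos.mpr (norm_pos_iff.mpr hy)))
  apply Real.cos_pos_of_mem_Ioo
  rw [Set.mem_Ioo]
  constructor <;> linarith [harg.1, harg.2]



/-- For `z ∈ ℂ \ [-1,1]`, the number `w = z - (z+1)^{1/2}·(z-1)^{1/2}` (principal square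
roots) lies in the punctured open unit disc, satisfies `(w + w⁻¹)/2 = z` and
`(w - w⁻¹)/2 = -(z+1)^{1/2}·(z-1)^{1/2}`, and is the unique preimage of `z` in the
punctured unit disc under `w ↦ (w + w⁻¹)/2`. -/
theorem stmt_3 (z : ℂ) (hz : ¬(z.im = 0 ∧ -1 ≤ z.re ∧ z.re ≤ 1)) :
    let w : ℂ := z - (z + 1) ^ ((1 : ℂ) / 2) * (z - 1) ^ ((1 : ℂ) / 2)
    (0 < ‖w‖ ∧ ‖w‖ < 1) ∧
      (w + w⁻¹) / 2 = z ∧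
      (w - w⁻¹) / 2 = -((z + 1) ^ ((1 : ℂ) / 2) * (z - 1) ^ ((1 : ℂ) / 2)) ∧
      ∀ w' : ℂ, 0 < ‖w'‖ → ‖w'‖ < 1 → (w' + w'⁻¹) / 2 = z → w' = w := by
  intro w
  set a : ℂ := (z + 1) ^ ((1 : ℂ) / 2) with ha
  set b : ℂ := (z - 1) ^ ((1 : ℂ) / 2) with hb
  have hw : w = z - a * b := rfl
  set s : ℂ := a * b with hs
  have ha2 : a ^ 2 = z + 1 := by
    rw [ha, one_div]; exact Complex.cpow_ofNat_inv_pow _ 2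
  have hb2 : b ^ 2 = z - 1 := by
    rw [hb, one_div]; exact Complex.cpow_ofNat_inv_pow _ 2
  have hs2 : s ^ 2 = z ^ 2 - 1 := by
    rw [hs, mul_pow, ha2, hb2]; ring
  have hinv : w * (z + s) = 1 := by
    have h : w * (z + s) = z ^ 2 - s ^ 2 := by rw [hw]; ring
    rw [h, hs2]; ring
  have hw0 : w ≠ 0 := left_ne_zero_of_mul_eq_one hinv
  have hwinv : w⁻¹ = z + s := inv_eq_of_mul_eq_one_right hinv
  -- key positivity
  have hK : 0 < a.re * b.re + a.im * b.im := key_pos z hz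
  have ha0 : a ≠ 0 := by
    intro h
    rw [h] at ha2
    have := congrArg Complex.im ha2
    simp at this
    have h2 := congrArg Complex.re ha2
    simp at h2
    exact hz ⟨this.symm, by constructor <;> linarith⟩
  have haa : 0 < a.re ^ 2 + a.im ^ 2 := by
    rcases Complex.ext_iff.not.mp ha0 with h
    by_contra hc
    push_neg at hc
    have h1 : a.re = 0 := by nlinarith [sq_nonneg a.re, sq_nonneg a.im]
    have h2 : a.im = 0 := by nlinarith [sq_nonneg a.re, sq_nonneg a.im]
    exact ha0 (Complex.ext h1 h2)
  -- X := Re (z * conj s) > 0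
  have hz2 : (2:ℂ) * z = a ^ 2 + b ^ 2 := by rw [ha2, hb2]; ring
  have hzre : 2 * z.re = a.re ^ 2 - a.im ^ 2 + (b.re ^ 2 - b.im ^ 2) := by
    have h := congrArg Complex.re hz2
    simp [Complex.mul_re, Complex.mul_im, pow_two] at h
    linear_combination h
  have hzim : 2 * z.im = 2 * (a.re * a.im) + 2 * (b.re * b.im) := by
    have h := congrArg Complex.im hz2
    simp [Complex.mul_re, Complex.mul_im, pow_two] at h
    linear_combination h
  have hsre : s.re = a.re * b.re - a.im * b.im := Complex.mul_re a b
  have hsim : s.im = a.re * b.im + a.im * b.re := Complex.mul_im a b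
  have hX : 0 < z.re * s.re + z.im * s.im := by
    have hid : 2 * (z.re * s.re + z.im * s.im) =
        (a.re ^ 2 + a.im ^ 2 + b.re ^ 2 + b.im ^ 2) * (a.re * b.re + a.im * b.im) := by
      rw [hsre, hsim]
      linear_combination (a.re * b.re - a.im * b.im) * hzre +
        (a.re * b.im + a.im * b.re) * hzim
    nlinarith [hid, hK, haa, sq_nonneg b.re, sq_nonneg b.im]
  have hns : Complex.normSq w < Complex.normSq (z + s) := by
    rw [hw, Complex.normSq_sub, Complex.normSq_add]
    have h1 : (z * (starRingEnd ℂ) s).re = z.re * s.re + z.im * s.im := by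
      simp [Complex.mul_re]
    rw [h1]
    linarith
  have hprod : Complex.normSq w * Complex.normSq (z + s) = 1 := by
    rw [← map_mul, hinv, Complex.normSq_one]
  have hnw0 : 0 < Complex.normSq w := Complex.normSq_pos.mpr hw0
  have hnw1 : Complex.normSq w < 1 := by nlinarith
  have habs : ‖w‖ < 1 := by
    nlinarith [Complex.sq_norm w, norm_nonneg w]
  refine ⟨⟨norm_pos_iff.mpr hw0, habs⟩, ?_, ?_, ?_⟩
  · rw [hwinv, hw]; ring
  · rw [hwinv, hw]; ring
  · intro w' h0 h1 hsum
    have hw'0 : w' ≠ 0 := norm_pos_iff.mp h0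
    have hq : w' ^ 2 - 2 * z * w' + 1 = 0 := by
      field_simp at hsum
      linear_combination hsum
    have hfac : (w' - w) * (w' - (z + s)) = 0 := by
      rw [hw]
      linear_combination hq - hs2
    rcases mul_eq_zero.mp hfac with h | h
    · exact sub_eq_zero.mp h
    · exfalso
      have hw' : w' = w⁻¹ := by rw [hwinv]; exact sub_eq_zero.mp h
      rw [hw', norm_inv] at h1
      have : 1 < (‖w‖)⁻¹ := by
        rw [lt_inv_comm₀ (by norm_num) (norm_pos_iff.mpr hw0)]
        simpa using habs
      linarith
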